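/- arXiv:1901.09527 — 2 statements merged into one kernel-verified Lean document; each statement's English description precedes it below -/
import Mathlib

section
/- Let r ≥ 1 be an integer and let G = (X ⊔ Y, E) be a finite bipartite graph with |N_G(X)| ≥ r·|X| ≥ 1. Then G contains a nonempty envy-free r-star matching. -/
attribute [local instance] Classical.propDecidable

variable {V : Type*}

/-- `X, Y` form a bipartition of the vertex set of the simple graph `G`:
they are disjoint, cover all vertices, and every edge joins `X` to `Y`. -/
def IsBipartition [Fintype V] (G : SimpleGraph V) (X Y : Finset V) : Prop :=
  Disjoint X Y ∧ X ∪ Y = Finset.univ ∧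
    ∀ ⦃u v : V⦄, G.Adj u v → (u ∈ X ∧ v ∈ Y) ∨ (u ∈ Y ∧ v ∈ X)

/-- `M` is a matching of `G` all of whose edges go from `X'` to `Y'`
(i.e. a matching of the induced subgraph `G[X', Y']`), recorded as a set of
pairwise vertex-disjoint adjacent pairs. -/
def IsBipMatching (G : SimpleGraph V) (X' Y' : Finset V) (M : Finset (V × V)) : Prop :=
  (∀ p ∈ M, p.1 ∈ X' ∧ p.2 ∈ Y' ∧ G.Adj p.1 p.2) ∧
  ∀ p ∈ M, ∀ q ∈ M, p ≠ q → p.1 ≠ q.1 ∧ p.2 ≠ q.2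

/-- `M` is envy-free w.r.t. `X`: no unmatched vertex of `X` is adjacent to a
matched vertex on the `Y`-side of `M`. -/
def EnvyFree (G : SimpleGraph V) (X : Finset V) (M : Finset (V × V)) : Prop :=
  ∀ x ∈ X, x ∉ M.image Prod.fst → ∀ y ∈ M.image Prod.snd, ¬ G.Adj x y

/-- The (bipartite) graph `G[X ∪ Y]` is `Y`-path-saturated: for some `k ≥ 1` there are
partitions `X = X_0 ⊔ ⋯ ⊔ X_k` and `Y = Y_1 ⊔ ⋯ ⊔ Y_k` such that for `1 ≤ i ≤ k`
there is a perfect matching between `X_i` and `Y_i`, and every vertex of `Y_i` is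
adjacent to some vertex of `X_{i-1}`. -/
def YPathSaturated (G : SimpleGraph V) (X Y : Finset V) : Prop :=
  ∃ k : ℕ, 1 ≤ k ∧ ∃ A B : ℕ → Finset V,
    (∀ i ∈ Finset.range (k + 1), ∀ j ∈ Finset.range (k + 1), i ≠ j → Disjoint (A i) (A j)) ∧
    (∀ i ∈ Finset.Icc 1 k, ∀ j ∈ Finset.Icc 1 k, i ≠ j → Disjoint (B i) (B j)) ∧
    X = (Finset.range (k + 1)).biUnion A ∧
    Y = (Finset.Icc 1 k).biUnion B ∧
    (∀ i ∈ Finset.Icc 1 k, ∃ f : V → V,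
      Set.BijOn f (A i) (B i) ∧ ∀ x ∈ A i, G.Adj x (f x)) ∧
    (∀ i ∈ Finset.Icc 1 k, ∀ y ∈ B i, ∃ x ∈ A (i - 1), G.Adj x y)

/-- `M` is an `r`-star matching of `G` with centers in `X` and leaves in `Y`:
a set of pairwise vertex-disjoint stars `K_{1,r}`, each recorded as a pair
(center, set of `r` leaves). -/
def IsStarMatching (G : SimpleGraph V) (X Y : Finset V) (r : ℕ)
    (M : Finset (V × Finset V)) : Prop :=
  (∀ p ∈ M, p.1 ∈ X ∧ p.2 ⊆ Y ∧ p.2.card = r ∧ ∀ y ∈ p.2, G.Adj p.1 y) ∧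
  ∀ p ∈ M, ∀ q ∈ M, p ≠ q → p.1 ≠ q.1 ∧ p.1 ∉ q.2 ∧ Disjoint p.2 q.2

/-- The `r`-star matching `M` is envy-free w.r.t. `X`: every vertex of `X` not matched
as a center is non-adjacent to every vertex matched as a leaf. -/
def StarEnvyFree (G : SimpleGraph V) (X : Finset V) (M : Finset (V × Finset V)) : Prop :=
  ∀ x ∈ X, x ∉ M.image Prod.fst → ∀ p ∈ M, ∀ y ∈ p.2, ¬ G.Adj x y

/-- The neighborhood of a finset, as a finset. -/
private noncomputable def nbrs [Fintype V] (G : SimpleGraph V) (S : Finset V) : Finset V :=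
  Finset.univ.filter fun y => ∃ x ∈ S, G.Adj x y

private lemma mem_nbrs [Fintype V] {G : SimpleGraph V} {S : Finset V} {y : V} :
    y ∈ nbrs G S ↔ ∃ x ∈ S, G.Adj x y := by
  simp [nbrs]

private lemma nbrs_union [Fintype V] (G : SimpleGraph V) (A B : Finset V) :
    nbrs G (A ∪ B) = nbrs G A ∪ nbrs G B := by
  ext y
  simp only [mem_nbrs, Finset.mem_union]
  constructor
  · rintro ⟨x, hx | hx, hadj⟩
    exacts [Or.inl ⟨x, hx, hadj⟩, Or.inr ⟨x, hx, hadj⟩]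
  · rintro (⟨x, hx, h⟩ | ⟨x, hx, h⟩)
    exacts [⟨x, Or.inl hx, h⟩, ⟨x, Or.inr hx, h⟩]

/-- if `|N_G(X)| ≥ r·|X| ≥ 1` then `G` contains a nonempty envy-free
`r`-star matching. -/
theorem nonempty_envy_free_star_matching [Fintype V]
    (G : SimpleGraph V) (X Y : Finset V) (hBip : IsBipartition G X Y)
    (r : ℕ) (hr : 1 ≤ r)
    (h1 : 1 ≤ r * X.card)
    (hN : r * X.card ≤ (Finset.univ.filter fun y => ∃ x ∈ X, G.Adj x y).card) :
    ∃ M : Finset (V × Finset V), IsStarMatching G X Y r M ∧ M.Nonempty ∧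
      StarEnvyFree G X M := by
  classical
  obtain ⟨hXY, hcov, hedge⟩ := hBip
  have hadjY : ∀ x ∈ X, ∀ y : V, G.Adj x y → y ∈ Y := by
    intro x hx y h
    rcases hedge h with ⟨_, hy⟩ | ⟨hx', _⟩
    · exact hy
    · exact absurd hx' (Finset.disjoint_left.mp hXY hx)
  -- deficiency function
  set f : Finset V → ℤ := fun S => (r : ℤ) * S.card - ((nbrs G S).card : ℤ) with hf
  have hNX : (r : ℤ) * X.card ≤ ((nbrs G X).card : ℤ) := by exact_mod_cast hN
  have hXne : X.Nonempty := by
    rw [← Finset.card_pos]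
    by_contra h
    push_neg at h
    interval_cases hc : X.card <;> omega
  -- a maximizer of f over subsets of X, of minimal cardinality
  obtain ⟨D0, hD0mem, hD0max⟩ :=
    Finset.exists_max_image X.powerset f ⟨∅, Finset.empty_mem_powerset X⟩
  set T := X.powerset.filter (fun S => ∀ S' ∈ X.powerset, f S' ≤ f S) with hT
  have hTne : T.Nonempty := ⟨D0, Finset.mem_filter.mpr ⟨hD0mem, hD0max⟩⟩
  obtain ⟨D, hDT, hDmin⟩ := Finset.exists_min_image T (fun S => S.card) hTne
  have hDX : D ⊆ X := Finset.mem_powerset.mp (Finset.mem_filter.mp hDT).1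
  have hDmax : ∀ S ⊆ X, f S ≤ f D := fun S hS =>
    (Finset.mem_filter.mp hDT).2 S (Finset.mem_powerset.mpr hS)
  -- X \ D is nonempty
  have hXD : (X \ D).Nonempty := by
    rw [Finset.sdiff_nonempty]
    intro hXsubD
    have hDeqX : D = X := Finset.Subset.antisymm hDX hXsubD
    have hfX : f X ≤ 0 := by
      simp only [hf]
      linarith
    have hfempty : f ∅ = 0 := by
      simp only [hf]
      have : nbrs G (∅ : Finset V) = ∅ := by
        ext y; simp [mem_nbrs]
      simp [this]
    have hemptyT : (∅ : Finset V) ∈ T := by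
      refine Finset.mem_filter.mpr ⟨Finset.empty_mem_powerset X, fun S' hS' => ?_⟩
      rw [hfempty]
      calc f S' ≤ f D := hDmax S' (Finset.mem_powerset.mp hS')
        _ = f X := by rw [hDeqX]
        _ ≤ 0 := hfX
    have := hDmin ∅ hemptyT
    simp only [Finset.card_empty, Nat.le_zero, Finset.card_eq_zero] at this
    rw [hDeqX] at this
    exact hXne.ne_empty this
  -- Hall's condition with multiplicity r for X \ D into the complement of nbrs G D
  have hKey : ∀ S ⊆ X \ D, (r : ℤ) * S.card ≤ ((nbrs G S \ nbrs G D).card : ℤ) := by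
    intro S hS
    have hSX : S ⊆ X := hS.trans (Finset.sdiff_subset)
    have hdisj : Disjoint S D := by
      rw [Finset.disjoint_left]
      intro a haS haD
      exact (Finset.mem_sdiff.mp (hS haS)).2 haD
    have hUX : D ∪ S ⊆ X := Finset.union_subset hDX hSX
    have hle : f (D ∪ S) ≤ f D := hDmax _ hUX
    have hcardU : (D ∪ S).card = D.card + S.card :=
      Finset.card_union_of_disjoint hdisj.symm
    have hNU : nbrs G (D ∪ S) = nbrs G D ∪ nbrs G S := nbrs_union G D S
    have hcardN : (nbrs G S \ nbrs G D).card + (nbrs G D).card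
        = (nbrs G (D ∪ S)).card := by
      rw [hNU, Finset.union_comm]
      exact Finset.card_sdiff_add_card _ _
    simp only [hf, hcardU] at hle
    have h2 : ((nbrs G S \ nbrs G D).card : ℤ) + ((nbrs G D).card : ℤ)
        = ((nbrs G (D ∪ S)).card : ℤ) := by exact_mod_cast hcardN
    push_cast at hle
    linarith
  -- apply Hall's theorem
  set t : {x // x ∈ X \ D} × Fin r → Finset V :=
    fun p => (Finset.univ.filter fun y => G.Adj (p.1 : V) y) \ nbrs G D with ht
  have hHall : ∀ s : Finset ({x // x ∈ X \ D} × Fin r), s.card ≤ (s.biUnion t).card := by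
    intro s
    set S : Finset V := s.image (fun p => (p.1 : V)) with hSdef
    have hSsub : S ⊆ X \ D := by
      intro a ha
      obtain ⟨p, _, rfl⟩ := Finset.mem_image.mp ha
      exact p.1.2
    -- s.card ≤ S.card * r
    have hcard1 : s.card ≤ S.card * r := by
      have hinj : Set.InjOn (fun p : {x // x ∈ X \ D} × Fin r => ((p.1 : V), p.2)) s := by
        intro p _ q _ h
        simp only [Prod.mk.injEq] at h
        exact Prod.ext (Subtype.ext h.1) h.2
      calc s.card
          = (s.image (fun p : {x // x ∈ X \ D} × Fin r => ((p.1 : V), p.2))).card :=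
            (Finset.card_image_of_injOn hinj).symm
        _ ≤ (S ×ˢ (Finset.univ : Finset (Fin r))).card := by
            apply Finset.card_le_card
            intro q hq
            obtain ⟨p, hp, rfl⟩ := Finset.mem_image.mp hq
            exact Finset.mem_product.mpr
              ⟨Finset.mem_image_of_mem _ hp, Finset.mem_univ _⟩
        _ = S.card * r := by simp [Finset.card_product]
    -- nbrs G S \ nbrs G D ⊆ s.biUnion t
    have hsub : nbrs G S \ nbrs G D ⊆ s.biUnion t := by
      intro y hy
      obtain ⟨hy1, hy2⟩ := Finset.mem_sdiff.mp hy
      obtain ⟨x, hxS, hadj⟩ := mem_nbrs.mp hy1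
      obtain ⟨p, hp, hpx⟩ := Finset.mem_image.mp hxS
      refine Finset.mem_biUnion.mpr ⟨p, hp, ?_⟩
      rw [ht]
      refine Finset.mem_sdiff.mpr ⟨?_, hy2⟩
      simp only [Finset.mem_filter, Finset.mem_univ, true_and]
      rw [hpx]; exact hadj
    have hcard2 : r * S.card ≤ (nbrs G S \ nbrs G D).card := by
      exact_mod_cast hKey S hSsub
    calc s.card ≤ S.card * r := hcard1
      _ = r * S.card := Nat.mul_comm _ _
      _ ≤ (nbrs G S \ nbrs G D).card := hcard2
      _ ≤ (s.biUnion t).card := Finset.card_le_card hsub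
  obtain ⟨F, hFinj, hFmem⟩ := (Finset.all_card_le_biUnion_card_iff_exists_injective t).mp hHall
  -- basic facts about F
  have hFadj : ∀ (x : {x // x ∈ X \ D}) (i : Fin r), G.Adj (x : V) (F (x, i)) := by
    intro x i
    have := hFmem (x, i)
    rw [ht] at this
    have := (Finset.mem_sdiff.mp this).1
    simpa using this
  have hFnot : ∀ (x : {x // x ∈ X \ D}) (i : Fin r), F (x, i) ∉ nbrs G D := by
    intro x i
    have := hFmem (x, i)
    rw [ht] at this
    exact (Finset.mem_sdiff.mp this).2
  -- construct the star matching
  set g : {x // x ∈ X \ D} → V × Finset V :=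
    fun x => ((x : V), (Finset.univ : Finset (Fin r)).image fun i => F (x, i)) with hg
  set M : Finset (V × Finset V) := (X \ D).attach.image g with hM
  have hmemM : ∀ p ∈ M, ∃ x : {x // x ∈ X \ D}, p = g x := by
    intro p hp
    obtain ⟨x, _, rfl⟩ := Finset.mem_image.mp hp
    exact ⟨x, rfl⟩
  have hleaf : ∀ (x : {x // x ∈ X \ D}) (y : V),
      y ∈ (g x).2 ↔ ∃ i : Fin r, F (x, i) = y := by
    intro x y
    simp [hg]
  refine ⟨M, ⟨?_, ?_⟩, ?_, ?_⟩
  · -- each star is valid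
    intro p hp
    obtain ⟨x, rfl⟩ := hmemM p hp
    have hxX : (x : V) ∈ X := (Finset.mem_sdiff.mp x.2).1
    refine ⟨hxX, ?_, ?_, ?_⟩
    · intro y hy
      obtain ⟨i, rfl⟩ := (hleaf x y).mp hy
      exact hadjY _ hxX _ (hFadj x i)
    · show ((Finset.univ : Finset (Fin r)).image fun i => F (x, i)).card = r
      rw [Finset.card_image_of_injective _ (fun i j h => by
        have := hFinj h
        exact (Prod.mk.injEq _ _ _ _).mp this |>.2)]
      simp
    · intro y hy
      obtain ⟨i, rfl⟩ := (hleaf x y).mp hy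
      exact hFadj x i
  · -- stars are pairwise disjoint
    intro p hp q hq hpq
    obtain ⟨x, rfl⟩ := hmemM p hp
    obtain ⟨x', rfl⟩ := hmemM q hq
    have hxx' : x ≠ x' := fun h => hpq (by rw [h])
    have hcc : (x : V) ≠ (x' : V) := fun h => hxx' (Subtype.ext h)
    refine ⟨hcc, ?_, ?_⟩
    · intro hmem
      obtain ⟨i, hi⟩ := (hleaf x' _).mp hmem
      have hxX : (x : V) ∈ X := (Finset.mem_sdiff.mp x.2).1
      have hx'X : (x' : V) ∈ X := (Finset.mem_sdiff.mp x'.2).1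
      have : (g x).1 ∈ Y := by
        rw [← hi]
        exact hadjY _ hx'X _ (hFadj x' i)
      exact Finset.disjoint_left.mp hXY hxX this
    · rw [Finset.disjoint_left]
      intro y hy1 hy2
      obtain ⟨i, hi⟩ := (hleaf x y).mp hy1
      obtain ⟨j, hj⟩ := (hleaf x' y).mp hy2
      have : ((x, i) : {x // x ∈ X \ D} × Fin r) = (x', j) := hFinj (by rw [hi, hj])
      exact hxx' ((Prod.mk.injEq _ _ _ _).mp this).1
  · -- nonempty
    obtain ⟨a, ha⟩ := hXD
    exact ⟨g ⟨a, ha⟩, Finset.mem_image_of_mem g (Finset.mem_attach _ _)⟩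
  · -- envy-free
    intro x hx hxnot p hp y hy
    obtain ⟨z, rfl⟩ := hmemM p hp
    obtain ⟨i, rfl⟩ := (hleaf z y).mp hy
    intro hadj
    -- x must be in D
    have hxD : x ∈ D := by
      by_contra hxD
      apply hxnot
      have : x ∈ X \ D := Finset.mem_sdiff.mpr ⟨hx, hxD⟩
      refine Finset.mem_image.mpr ⟨g ⟨x, this⟩, ?_, rfl⟩
      exact Finset.mem_image_of_mem g (Finset.mem_attach _ _)
    exact hFnot z i (mem_nbrs.mpr ⟨x, hxD, hadj⟩)
end

section
/- Let l ≥ 2 be an integer, let O be a finite set of objects, and let there be n ≥ 2 agents, where each agent i ∈ {1, …, n} has an additive valuation V_i : 2^O → ℝ≥0 (so V_i(A ∪ B) = V_i(A) + V_i(B) for disjoint A, B ⊆ O). Then there exists a partition of the entire set O into n pairwise-disjoint bundles Z_1 ⊔ ⋯ ⊔ Z_n = O such that for every agent i: V_i(Z_i) ≥ MMS_i^{l−1,ln−2}(O). -/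
set_option linter.unusedSectionVars false
set_option maxHeartbeats 2000000

/-- The `l`-out-of-`d` maximin share of an agent with valuation `Vi` over the whole
finite set of objects `α`: the maximum, over all partitions of the objects into `d`
pairwise-disjoint subsets, of the minimum, over all unions of `l` of the subsets,
of the value of that union. -/
noncomputable def MMS {α : Type*} [Fintype α] [DecidableEq α]
    (Vi : Finset α → ℝ) (l d : ℕ) : ℝ :=
  sSup { t : ℝ | ∃ P : Fin d → Finset α,
    (∀ i j, i ≠ j → Disjoint (P i) (P j)) ∧
    Finset.univ.biUnion P = Finset.univ ∧
    t = sInf { u : ℝ | ∃ S : Finset (Fin d), S.card = l ∧ u = Vi (S.biUnion P) } }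

open Finset

section Basics

variable {α : Type*} [Fintype α] [DecidableEq α]
variable (V : Finset α → ℝ)
variable (hadd : ∀ A B, Disjoint A B → V (A ∪ B) = V A + V B)

include hadd

lemma val_empty : V ∅ = 0 := by
  have h := hadd ∅ ∅ (disjoint_empty_left ∅)
  simp at h
  linarith

lemma val_biUnion {β : Type*} [DecidableEq β] (S : Finset β) (f : β → Finset α)
    (hdisj : ∀ i ∈ S, ∀ j ∈ S, i ≠ j → Disjoint (f i) (f j)) :
    V (S.biUnion f) = ∑ b ∈ S, V (f b) := by
  classical
  induction S using Finset.induction_on with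
  | empty => simpa using val_empty V hadd
  | @insert a s ha ih =>
    rw [Finset.biUnion_insert, Finset.sum_insert ha]
    have hd : Disjoint (f a) (s.biUnion f) := by
      rw [Finset.disjoint_biUnion_right]
      intro b hb
      exact hdisj a (mem_insert_self a s) b (mem_insert_of_mem hb)
        (fun h => ha (h ▸ hb))
    rw [hadd _ _ hd, ih]
    intro i hi j hj hij
    exact hdisj i (mem_insert_of_mem hi) j (mem_insert_of_mem hj) hij

lemma val_mono (hnn : ∀ A, 0 ≤ V A) {A B : Finset α} (h : A ⊆ B) : V A ≤ V B := by
  have : B = A ∪ (B \ A) := by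
    rw [Finset.union_sdiff_of_subset h]
  rw [this, hadd _ _ (Finset.disjoint_sdiff)]
  have := hnn (B \ A)
  linarith

lemma val_singletons (S : Finset α) : V S = ∑ g ∈ S, V {g} := by
  have h1 : S.biUnion (fun g => ({g} : Finset α)) = S := by
    ext x; simp
  have := val_biUnion V hadd S (fun g => ({g} : Finset α)) ?_
  · rw [h1] at this; exact this
  · intro i _ j _ hij
    simp [Finset.disjoint_singleton, hij, Ne.symm hij]

end Basics

section Attain

variable {α : Type*} [Fintype α] [DecidableEq α]

/-- The MMS value is attained: there is a partition all of whose `lpar`-unions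
are at least the MMS value. -/
lemma exists_opt_partition (Vi : Finset α → ℝ) (lpar d : ℕ) (hd : 0 < d) :
    ∃ P : Fin d → Finset α, (∀ i j, i ≠ j → Disjoint (P i) (P j)) ∧
      Finset.univ.biUnion P = Finset.univ ∧
      ∀ S : Finset (Fin d), S.card = lpar → MMS Vi lpar d ≤ Vi (S.biUnion P) := by
  classical
  set T : Set ℝ :=
    { t : ℝ | ∃ P : Fin d → Finset α,
      (∀ i j, i ≠ j → Disjoint (P i) (P j)) ∧
      Finset.univ.biUnion P = Finset.univ ∧
      t = sInf { u : ℝ | ∃ S : Finset (Fin d), S.card = lpar ∧ u = Vi (S.biUnion P) } } with hT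
  have hTsub : T ⊆ Set.range (fun P : Fin d → Finset α =>
      sInf { u : ℝ | ∃ S : Finset (Fin d), S.card = lpar ∧ u = Vi (S.biUnion P) }) := by
    rintro t ⟨P, _, _, rfl⟩
    exact ⟨P, rfl⟩
  have hTfin : T.Finite := Set.Finite.subset (Set.finite_range _) hTsub
  have hTne : T.Nonempty := by
    refine ⟨_, ⟨fun j => if j = ⟨0, hd⟩ then Finset.univ else ∅, ?_, ?_, rfl⟩⟩
    · intro i j hij
      by_cases hi : i = ⟨0, hd⟩ <;> by_cases hj : j = ⟨0, hd⟩ <;>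
        simp_all
    · apply Finset.Subset.antisymm
      · intro x _; simp
      · intro x _
        simp only [Finset.mem_biUnion]
        exact ⟨⟨0, hd⟩, Finset.mem_univ _, by simp⟩
  have hmem : MMS Vi lpar d ∈ T := by
    have := Set.Nonempty.csSup_mem hTne hTfin
    simpa [MMS, hT] using this
  obtain ⟨P, h1, h2, h3⟩ := hmem
  refine ⟨P, h1, h2, ?_⟩
  intro S hS
  rw [h3]
  have hfin : { u : ℝ | ∃ S : Finset (Fin d), S.card = lpar ∧ u = Vi (S.biUnion P) }.Finite := by
    apply Set.Finite.subset (Set.finite_range (fun S : Finset (Fin d) => Vi (S.biUnion P)))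
    rintro u ⟨S, _, rfl⟩
    exact ⟨S, rfl⟩
  exact csInf_le hfin.bddBelow ⟨S, hS, rfl⟩

end Attain

section MinSubset

variable {ι : Type*} [DecidableEq ι]

/-- If every `m`-subset of `I` has `w`-sum at least `τ`, then the total sum is at
least `|I| * τ / m`. -/
lemma sum_ge_card_mul (w : ι → ℝ) (I : Finset ι) (m : ℕ) (hm : 0 < m) (τ : ℝ)
    (hcard : m ≤ I.card)
    (h : ∀ S ⊆ I, S.card = m → τ ≤ ∑ i ∈ S, w i) :
    (I.card : ℝ) * (τ / m) ≤ ∑ i ∈ I, w i := by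
  classical
  have hne : (I.powersetCard m).Nonempty := Finset.powersetCard_nonempty.mpr hcard
  obtain ⟨S₀, hS₀mem, hS₀min⟩ := Finset.exists_min_image (I.powersetCard m)
    (fun S => ∑ i ∈ S, w i) hne
  rw [Finset.mem_powersetCard] at hS₀mem
  obtain ⟨hS₀sub, hS₀card⟩ := hS₀mem
  have hτ : τ ≤ ∑ i ∈ S₀, w i := h S₀ hS₀sub hS₀card
  -- every element outside S₀ is ≥ every element inside S₀
  have hout : ∀ p ∈ I \ S₀, τ / m ≤ w p := by
    intro p hp
    rw [Finset.mem_sdiff] at hp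
    -- w p ≥ w q for q ∈ S₀
    have hge : ∀ q ∈ S₀, w q ≤ w p := by
      intro q hq
      have hS' : (insert p (S₀.erase q)) ∈ I.powersetCard m := by
        rw [Finset.mem_powersetCard]
        constructor
        · intro x hx
          rcases Finset.mem_insert.mp hx with rfl | hx
          · exact hp.1
          · exact hS₀sub (Finset.mem_of_mem_erase hx)
        · rw [Finset.card_insert_of_notMem, Finset.card_erase_of_mem hq, hS₀card]
          · omega
          · intro hmem
            exact hp.2 (Finset.mem_of_mem_erase hmem)
      have := hS₀min _ hS'
      rw [Finset.sum_insert (fun hmem => hp.2 (Finset.mem_of_mem_erase hmem))] at this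
      have herase : ∑ i ∈ S₀.erase q, w i = (∑ i ∈ S₀, w i) - w q := by
        rw [Finset.sum_erase_eq_sub hq]
      linarith
    -- m * w p ≥ sum S₀ ≥ τ
    have : (m : ℝ) * w p ≥ ∑ q ∈ S₀, w q := by
      calc ∑ q ∈ S₀, w q ≤ ∑ _q ∈ S₀, w p := Finset.sum_le_sum hge
        _ = (m : ℝ) * w p := by rw [Finset.sum_const, hS₀card]; ring
    rw [div_le_iff₀ (by positivity : (0:ℝ) < m)]
    nlinarith
  have hsplit : ∑ i ∈ I, w i = ∑ i ∈ S₀, w i + ∑ i ∈ I \ S₀, w i := by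
    rw [← Finset.sum_union (Finset.disjoint_sdiff)]
    congr 1
    rw [Finset.union_sdiff_of_subset hS₀sub]
  have hcard2 : (I \ S₀).card = I.card - m := by
    rw [Finset.card_sdiff_of_subset hS₀sub, hS₀card]
  have hrest : ((I.card - m : ℕ) : ℝ) * (τ / m) ≤ ∑ i ∈ I \ S₀, w i := by
    calc ((I.card - m : ℕ) : ℝ) * (τ / m) = ∑ _i ∈ I \ S₀, (τ / m) := by
          rw [Finset.sum_const, hcard2]; ring
      _ ≤ ∑ i ∈ I \ S₀, w i := Finset.sum_le_sum hout
  have hτm : τ = (m : ℝ) * (τ / m) := by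
    field_simp
  have hc : ((I.card - m : ℕ) : ℝ) = (I.card : ℝ) - m := by
    have := Nat.cast_sub hcard (R := ℝ)
    simpa using this
  rw [hsplit]
  rw [hc] at hrest
  nlinarith [hτ]

end MinSubset


section Root

variable {α : Type*} [Fintype α] [DecidableEq α]
variable (V : Finset α → ℝ)
variable (hadd : ∀ A B, Disjoint A B → V (A ∪ B) = V A + V B)
variable (hnn : ∀ A, 0 ≤ V A)

include hadd hnn

/-- ROOT lemma. -/
lemma root_lemma {d m : ℕ} (hm : 0 < m) (τ : ℝ) (hτ : 0 ≤ τ)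
    (Q : Fin d → Finset α)
    (hQd : ∀ i j, i ≠ j → Disjoint (Q i) (Q j))
    (hQc : Finset.univ.biUnion Q = Finset.univ)
    (hQτ : ∀ S : Finset (Fin d), S.card = m → τ ≤ V (S.biUnion Q))
    (F : Finset α) (hdF : F.card + m ≤ d) :
    ((d : ℝ) - F.card) * (τ / m) + V F ≤ V Finset.univ := by
  classical
  set T : Finset (Fin d) := Finset.univ.filter (fun p => (Q p ∩ F).Nonempty) with hTdef
  have hTcard : T.card ≤ F.card := by
    have h1 : T.card ≤ ∑ p ∈ T, (Q p ∩ F).card := by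
      have : ∀ p ∈ T, 1 ≤ (Q p ∩ F).card := by
        intro p hp
        rw [hTdef, Finset.mem_filter] at hp
        exact Finset.Nonempty.card_pos hp.2
      calc T.card = ∑ _p ∈ T, 1 := by simp
        _ ≤ _ := Finset.sum_le_sum this
    have h2 : ∑ p ∈ T, (Q p ∩ F).card = (T.biUnion (fun p => Q p ∩ F)).card := by
      rw [Finset.card_biUnion]
      intro i hi j hj hij
      exact Finset.disjoint_of_subset_left (Finset.inter_subset_left)
        (Finset.disjoint_of_subset_right (Finset.inter_subset_left) (hQd i j hij))
    have h3 : T.biUnion (fun p => Q p ∩ F) ⊆ F := by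
      intro x hx
      rw [Finset.mem_biUnion] at hx
      obtain ⟨p, _, hx⟩ := hx
      exact (Finset.mem_inter.mp hx).2
    calc T.card ≤ _ := h1
      _ = _ := h2
      _ ≤ F.card := Finset.card_le_card h3
  have hFsub : F ⊆ T.biUnion Q := by
    intro x hxF
    have : x ∈ Finset.univ.biUnion Q := by rw [hQc]; exact Finset.mem_univ x
    rw [Finset.mem_biUnion] at this
    obtain ⟨p, _, hxp⟩ := this
    rw [Finset.mem_biUnion]
    refine ⟨p, ?_, hxp⟩
    rw [hTdef, Finset.mem_filter]
    exact ⟨Finset.mem_univ _, ⟨x, Finset.mem_inter.mpr ⟨hxp, hxF⟩⟩⟩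
  have hVF : V F ≤ ∑ p ∈ T, V (Q p) := by
    calc V F ≤ V (T.biUnion Q) := val_mono V hadd hnn hFsub
      _ = ∑ p ∈ T, V (Q p) := val_biUnion V hadd T Q (fun i _ j _ hij => hQd i j hij)
  set R : Finset (Fin d) := Finset.univ \ T with hRdef
  have hRcard : R.card = d - T.card := by
    rw [hRdef, Finset.card_sdiff_of_subset (Finset.subset_univ T), Finset.card_univ, Fintype.card_fin]
  have hRge : m ≤ R.card := by omega
  have hRsum : ((R.card : ℝ)) * (τ / m) ≤ ∑ p ∈ R, V (Q p) := by
    apply sum_ge_card_mul (fun p => V (Q p)) R m hm τ hRge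
    intro S hS hScard
    calc τ ≤ V (S.biUnion Q) := hQτ S hScard
      _ = ∑ p ∈ S, V (Q p) := val_biUnion V hadd S Q (fun i _ j _ hij => hQd i j hij)
  have htot : V Finset.univ = ∑ p ∈ T, V (Q p) + ∑ p ∈ R, V (Q p) := by
    have h1 : V Finset.univ = ∑ p ∈ (Finset.univ : Finset (Fin d)), V (Q p) := by
      conv_lhs => rw [← hQc]
      exact val_biUnion V hadd _ Q (fun i _ j _ hij => hQd i j hij)
    rw [h1, ← Finset.sum_union (Finset.disjoint_sdiff)]
    congr 1
    rw [Finset.union_sdiff_of_subset (Finset.subset_univ T)]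
  have hcast : ((d : ℝ) - F.card) ≤ (R.card : ℝ) := by
    have h4 : (d - T.card : ℕ) ≥ d - F.card := by omega
    have h5 : ((d - F.card : ℕ) : ℝ) = (d : ℝ) - F.card := by
      have : F.card ≤ d := by omega
      push_cast [Nat.cast_sub this]
      ring
    rw [hRcard, ← h5]
    exact_mod_cast h4
  have : ((d : ℝ) - F.card) * (τ / m) ≤ (R.card : ℝ) * (τ/m) :=
    mul_le_mul_of_nonneg_right hcast (by positivity)
  linarith

end Root


section ListU

variable {α : Type*} [DecidableEq α]

def lUnion (gs : List (Finset α)) : Finset α := gs.foldr (· ∪ ·) ∅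

@[simp] lemma lUnion_nil : lUnion ([] : List (Finset α)) = ∅ := rfl

@[simp] lemma lUnion_cons (g : Finset α) (gs : List (Finset α)) :
    lUnion (g :: gs) = g ∪ lUnion gs := rfl

lemma lUnion_append (a b : List (Finset α)) : lUnion (a ++ b) = lUnion a ∪ lUnion b := by
  induction a with
  | nil => simp
  | cons g a ih => simp [ih, Finset.union_assoc]

lemma lUnion_subset {gs : List (Finset α)} {X : Finset α} (h : ∀ g ∈ gs, g ⊆ X) :
    lUnion gs ⊆ X := by
  induction gs with
  | nil => simp
  | cons g gs ih =>
    simp only [lUnion_cons, Finset.union_subset_iff]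
    exact ⟨h g (by simp), ih (fun g' hg' => h g' (by simp [hg']))⟩

lemma lUnion_disjoint {gs : List (Finset α)} {X : Finset α} (h : ∀ g ∈ gs, Disjoint g X) :
    Disjoint (lUnion gs) X := by
  induction gs with
  | nil => simp
  | cons g gs ih =>
    simp only [lUnion_cons, Finset.disjoint_union_left]
    exact ⟨h g (by simp), ih (fun g' hg' => h g' (by simp [hg']))⟩

variable (V : Finset α → ℝ)
variable (hadd : ∀ A B, Disjoint A B → V (A ∪ B) = V A + V B)

include hadd

lemma val_lUnion {gs : List (Finset α)} (hd : List.Pairwise Disjoint gs) :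
    V (lUnion gs) = (gs.map V).sum := by
  induction gs with
  | nil =>
    have h := hadd ∅ ∅ (disjoint_empty_left ∅)
    simp at h ⊢
    linarith
  | cons g gs ih =>
    rw [List.pairwise_cons] at hd
    have hdisj : Disjoint g (lUnion gs) :=
      (lUnion_disjoint (fun g' hg' => (hd.1 g' hg').symm)).symm
    simp only [lUnion_cons, List.map_cons, List.sum_cons]
    rw [hadd _ _ hdisj, ih hd.2]

end ListU

section Bag

variable {α : Type*} [DecidableEq α] {n : ℕ}
variable (V : Fin n → Finset α → ℝ)
variable (hadd : ∀ j A B, Disjoint A B → V j (A ∪ B) = V j A + V j B)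

include hadd

/-- Bag-filling lemma. -/
lemma bag_lemma (τ : Fin n → ℝ) (m : ℕ) (hm : 0 < m) :
    ∀ (k : ℕ) (D : Finset (Fin n)), D.card = k →
    ∀ (gs : List (Finset α)), List.Pairwise Disjoint gs →
    (∀ j ∈ D, 0 < τ j) →
    (∀ j ∈ D, ∀ ms : List (Finset α), ms.Sublist gs →
      (∀ g ∈ ms, τ j ≤ (m : ℝ) * V j g) → ms.length + 1 ≤ k →
      (k : ℝ) * τ j + ((k : ℝ) - 1) * (τ j / m) +
        (((ms.map (V j)).sum) - (ms.length : ℝ) * (τ j / m)) < (gs.map (V j)).sum) →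
    ∃ bag : Fin n → Finset α,
      (∀ j, j ∉ D → bag j = ∅) ∧ (∀ j ∈ D, τ j ≤ V j (bag j)) ∧
      (∀ j, bag j ⊆ lUnion gs) ∧ (∀ j j', j ≠ j' → Disjoint (bag j) (bag j')) := by
  classical
  intro k
  induction k with
  | zero =>
    intro D hD gs _ _ _
    refine ⟨fun _ => ∅, fun _ _ => rfl, ?_, by simp, by simp⟩
    intro j hj
    rw [Finset.card_eq_zero.mp hD] at hj
    simp at hj
  | succ k ih =>
    intro D hD gs hdisj hτ HYP
    have hDne : D.Nonempty := by
      apply Finset.card_pos.mp; omega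
    have hPtop : ∃ j ∈ D, τ j ≤ ((gs.take gs.length).map (V j)).sum := by
      obtain ⟨j, hj⟩ := hDne
      refine ⟨j, hj, ?_⟩
      have h1 := HYP j hj [] (List.nil_sublist gs) ?_ ?_
      · simp only [List.map_nil, List.sum_nil, List.length_nil, Nat.cast_zero] at h1
        have hτj := hτ j hj
        have hk0 : (0:ℝ) ≤ (k : ℝ) * τ j := by positivity
        have hk1 : (0:ℝ) ≤ (k : ℝ) * (τ j / m) := by positivity
        rw [List.take_length]
        push_cast at h1
        nlinarith
      · intro g hg
        simp at hg
      · simp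
    have hPex : ∃ len, ∃ j ∈ D, τ j ≤ ((gs.take len).map (V j)).sum := ⟨gs.length, hPtop⟩
    set len₀ := Nat.find hPex with hlen₀
    have h0 : ∃ j ∈ D, τ j ≤ ((gs.take len₀).map (V j)).sum := Nat.find_spec hPex
    have hmin : ∀ l, l < len₀ → ¬ (∃ j ∈ D, τ j ≤ ((gs.take l).map (V j)).sum) :=
      fun l hl => Nat.find_min hPex hl
    have hlen₀pos : 1 ≤ len₀ := by
      rcases Nat.eq_zero_or_pos len₀ with h | h
      · exfalso
        obtain ⟨j, hjD, hjval⟩ := h0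
        rw [h] at hjval
        simp only [List.take_zero, List.map_nil, List.sum_nil] at hjval
        exact absurd hjval (not_le.mpr (hτ j hjD))
      · exact h
    have hlen₀le : len₀ ≤ gs.length := Nat.find_min' hPex hPtop
    set pre := gs.take len₀ with hpre
    set rest := gs.drop len₀ with hrest
    have hsplit : pre ++ rest = gs := List.take_append_drop len₀ gs
    have hℓlt : len₀ - 1 < gs.length := by omega
    set ℓ := gs.get ⟨len₀ - 1, hℓlt⟩ with hℓ
    have hpre_succ : pre = gs.take (len₀ - 1) ++ [ℓ] := by
      rw [hpre]
      have h5 : len₀ = (len₀ - 1) + 1 := by omega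
      rw [h5, List.take_succ]
      congr 1
      rw [List.getElem?_eq_getElem hℓlt]
      rfl
    obtain ⟨j₀, hj₀D, hj₀val⟩ := h0
    set D' := D.erase j₀ with hD'
    have hD'card : D'.card = k := by
      rw [hD', Finset.card_erase_of_mem hj₀D, hD]
      omega
    have hrest_sub : rest.Sublist gs := List.drop_sublist len₀ gs
    have hrest_disj : List.Pairwise Disjoint rest := hdisj.sublist hrest_sub
    have hτ' : ∀ j ∈ D', 0 < τ j := fun j hj => hτ j (Finset.mem_of_mem_erase hj)
    have hWsplit : ∀ j, ((gs.map (V j)).sum) = ((pre.map (V j)).sum) + ((rest.map (V j)).sum) := by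
      intro j
      conv_lhs => rw [← hsplit]
      rw [List.map_append, List.sum_append]
    have hWpre_lt : ∀ j ∈ D, ((pre.map (V j)).sum) < τ j + V j ℓ := by
      intro j hjD
      have hnP := hmin (len₀ - 1) (by omega)
      push_neg at hnP
      have h1 := hnP j hjD
      rw [hpre_succ, List.map_append, List.sum_append]
      simp only [List.map_cons, List.map_nil, List.sum_cons, List.sum_nil]
      linarith
    have HYP' : ∀ j ∈ D', ∀ ms : List (Finset α), ms.Sublist rest →
        (∀ g ∈ ms, τ j ≤ (m : ℝ) * V j g) → ms.length + 1 ≤ k →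
        (k : ℝ) * τ j + ((k : ℝ) - 1) * (τ j / m) +
          (((ms.map (V j)).sum) - (ms.length : ℝ) * (τ j / m)) < (rest.map (V j)).sum := by
      intro j hjD' ms hms hmed hlen
      have hjD : j ∈ D := Finset.mem_of_mem_erase hjD'
      have hWp := hWpre_lt j hjD
      have hW := hWsplit j
      by_cases hmedℓ : τ j ≤ (m : ℝ) * V j ℓ
      · have hℓpre : List.Sublist [ℓ] pre := by
          apply List.singleton_sublist.mpr
          rw [hpre_succ]
          simp
        have hmssub : List.Sublist (ℓ :: ms) gs := by
          have h6 : List.Sublist ([ℓ] ++ ms) (pre ++ rest) := List.Sublist.append hℓpre hms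
          rw [hsplit] at h6
          simpa using h6
        have h1 := HYP j hjD (ℓ :: ms) hmssub ?_ ?_
        · simp only [List.map_cons, List.sum_cons, List.length_cons] at h1
          push_cast at h1 ⊢
          linarith
        · intro g hg
          rcases List.mem_cons.mp hg with rfl | hg
          · exact hmedℓ
          · exact hmed g hg
        · simp only [List.length_cons]; omega
      · push_neg at hmedℓ
        have hVℓ : V j ℓ < τ j / m := by
          rw [lt_div_iff₀ (by positivity : (0:ℝ) < m)]
          nlinarith
        have hmssub : List.Sublist ms gs := hms.trans hrest_sub
        have h1 := HYP j hjD ms hmssub hmed (by omega)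
        push_cast at h1 ⊢
        linarith
    obtain ⟨bag', hb1, hb2, hb3, hb4⟩ := ih D' hD'card rest hrest_disj hτ' HYP'
    have hpre_disj : List.Pairwise Disjoint pre := hdisj.sublist (List.take_sublist len₀ gs)
    have hpre_rest_disj : Disjoint (lUnion pre) (lUnion rest) := by
      apply lUnion_disjoint
      intro g hg
      apply Disjoint.symm
      apply lUnion_disjoint
      intro g' hg'
      have h7 := (List.pairwise_append.mp (by rw [hsplit]; exact hdisj)).2.2
      exact (h7 g hg g' hg').symm
    refine ⟨fun j => if j = j₀ then lUnion pre else bag' j, ?_, ?_, ?_, ?_⟩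
    · intro j hj
      have hne : j ≠ j₀ := fun h => hj (h ▸ hj₀D)
      dsimp only
      rw [if_neg hne]
      exact hb1 j (fun hmem => hj (Finset.mem_of_mem_erase hmem))
    · intro j hj
      dsimp only
      by_cases hje : j = j₀
      · subst hje
        rw [if_pos rfl, val_lUnion (V j) (hadd j) hpre_disj]
        exact hj₀val
      · rw [if_neg hje]
        exact hb2 j (Finset.mem_erase.mpr ⟨hje, hj⟩)
    · intro j
      dsimp only
      by_cases hje : j = j₀
      · rw [if_pos hje]
        conv_rhs => rw [← hsplit]
        rw [lUnion_append]
        exact Finset.subset_union_left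
      · rw [if_neg hje]
        refine (hb3 j).trans ?_
        conv_rhs => rw [← hsplit]
        rw [lUnion_append]
        exact Finset.subset_union_right
    · intro j j' hjj'
      dsimp only
      by_cases hje : j = j₀ <;> by_cases hje' : j' = j₀
      · exact absurd (hje.trans hje'.symm) hjj'
      · rw [if_pos hje, if_neg hje']
        exact Finset.disjoint_of_subset_right (hb3 j') hpre_rest_disj
      · rw [if_neg hje, if_pos hje']
        exact Finset.disjoint_of_subset_left (hb3 j) hpre_rest_disj.symm
      · rw [if_neg hje, if_neg hje']
        exact hb4 j j' hjj'

end Bag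


section Helpers

variable {α : Type*} [DecidableEq α]

lemma mem_lUnion {gs : List (Finset α)} {x : α} : x ∈ lUnion gs ↔ ∃ g ∈ gs, x ∈ g := by
  induction gs with
  | nil => simp
  | cons g gs ih => simp [ih]

lemma lUnion_toList_map {β : Type*} (A : Finset β) (f : β → Finset α) :
    lUnion (A.toList.map f) = A.biUnion f := by
  ext x
  rw [mem_lUnion, Finset.mem_biUnion]
  constructor
  · rintro ⟨g, hg, hx⟩
    rw [List.mem_map] at hg
    obtain ⟨b, hb, rfl⟩ := hg
    exact ⟨b, Finset.mem_toList.mp hb, hx⟩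
  · rintro ⟨b, hb, hx⟩
    exact ⟨f b, List.mem_map.mpr ⟨b, Finset.mem_toList.mpr hb, rfl⟩, hx⟩

lemma card_lUnion_le (gs : List (Finset α)) :
    (lUnion gs).card ≤ (gs.map Finset.card).sum := by
  induction gs with
  | nil => simp
  | cons g gs ih =>
    simp only [lUnion_cons, List.map_cons, List.sum_cons]
    calc (g ∪ lUnion gs).card ≤ g.card + (lUnion gs).card := Finset.card_union_le _ _
      _ ≤ g.card + (gs.map Finset.card).sum := by omega

lemma pairwise_disjoint_toList_map {β : Type*} (A : Finset β) (f : β → Finset α)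
    (h : ∀ i ∈ A, ∀ j ∈ A, i ≠ j → Disjoint (f i) (f j)) :
    List.Pairwise Disjoint (A.toList.map f) := by
  rw [List.pairwise_map]
  refine List.Pairwise.imp_of_mem ?_ (A.nodup_toList)
  intro a b ha hb hne
  exact h a (Finset.mem_toList.mp ha) b (Finset.mem_toList.mp hb) hne

lemma biUnion_disjoint_of_disjoint {d : ℕ} (P : Fin d → Finset α)
    (hP : ∀ i j, i ≠ j → Disjoint (P i) (P j)) {A B : Finset (Fin d)}
    (h : Disjoint A B) : Disjoint (A.biUnion P) (B.biUnion P) := by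
  rw [Finset.disjoint_biUnion_left]
  intro p hp
  rw [Finset.disjoint_biUnion_right]
  intro q hq
  exact hP p q (fun hpq => Finset.disjoint_left.mp h hp (hpq ▸ hq))

end Helpers

open Finset in
/-- for `l ≥ 2` and `n ≥ 2` agents with nonnegative additive valuations
over a finite set of objects, there is a partition of all the objects into `n` bundles
giving each agent `i` at least its (l-1)-out-of-(ln-2) maximin share. -/
theorem exists_l_sub_one_out_of_ln_sub_two_MMS_allocation
    {α : Type*} [Fintype α] [DecidableEq α] (l : ℕ) (hl : 2 ≤ l)
    (n : ℕ) (hn : 2 ≤ n)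
    (Val : Fin n → Finset α → ℝ)
    (hnonneg : ∀ i A, 0 ≤ Val i A)
    (hadd : ∀ i A B, Disjoint A B → Val i (A ∪ B) = Val i A + Val i B) :
    ∃ Z : Fin n → Finset α,
      (∀ i j, i ≠ j → Disjoint (Z i) (Z j)) ∧
      Finset.univ.biUnion Z = Finset.univ ∧
      ∀ i, MMS (Val i) (l - 1) (l * n - 2) ≤ Val i (Z i) := by
  classical
  set m := l - 1 with hm_def
  set d := l * n - 2 with hd_def
  have hm : 1 ≤ m := by omega
  have hln : 4 ≤ l * n := by
    calc 4 = 2 * 2 := rfl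
    _ ≤ l * n := Nat.mul_le_mul hl hn
  have hd2 : 2 ≤ d := by omega
  have hdm : d + 2 = m * n + n := by
    have h1 : l = m + 1 := by omega
    have : l * n = m * n + n := by rw [h1]; ring
    omega
  have hmn_le_d : m * n ≤ d := by omega
  -- optimal partitions for every agent
  have hQall : ∀ i : Fin n, ∃ Q : Fin d → Finset α,
      (∀ p q, p ≠ q → Disjoint (Q p) (Q q)) ∧
      Finset.univ.biUnion Q = Finset.univ ∧
      ∀ S : Finset (Fin d), S.card = m → MMS (Val i) m d ≤ Val i (S.biUnion Q) :=
    fun i => exists_opt_partition (Val i) m d (by omega)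
  choose Q hQ1 hQ2 hQ3 using hQall
  set τ : Fin n → ℝ := fun i => MMS (Val i) m d with hτ_def
  set D0 : Fin n := ⟨n - 1, by omega⟩ with hD0_def
  set P := Q D0 with hP_def
  -- positive non-divider agents
  set X : Finset (Fin n) := (Finset.univ.erase D0).filter (fun i => 0 < τ i) with hX_def
  have hD0X : D0 ∉ X := by
    rw [hX_def]
    intro h
    exact (Finset.notMem_erase D0 Finset.univ) (Finset.mem_of_mem_filter _ h)
  have hXcard : X.card ≤ n - 1 := by
    calc X.card ≤ (Finset.univ.erase D0).card := Finset.card_filter_le _ _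
      _ = n - 1 := by rw [Finset.card_erase_of_mem (Finset.mem_univ _)]; simp
  -- likes
  set L : Fin n → Finset (Fin d) := fun j => Finset.univ.filter
    (fun p => τ j ≤ (m : ℝ) * Val j (P p)) with hL_def
  set NN : Finset (Fin n) → Finset (Fin d) := fun D => D.biUnion L with hNN_def
  -- maximal deficient set
  have hDS : ∃ DS : Finset (Fin n), DS ⊆ X ∧ (NN DS).card ≤ m * DS.card ∧
      ∀ U ⊆ X, DS.card < U.card → m * U.card ≤ (NN U).card := by
    by_cases hfam : (X.powerset.filter (fun D => D.Nonempty ∧ (NN D).card < m * D.card)).Nonempty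
    · obtain ⟨DS, hmem, hmax⟩ := Finset.exists_max_image _ Finset.card hfam
      rw [Finset.mem_filter, Finset.mem_powerset] at hmem
      refine ⟨DS, hmem.1, le_of_lt hmem.2.2, ?_⟩
      intro U hU hcard
      by_contra hlt
      push_neg at hlt
      have hUne : U.Nonempty := Finset.card_pos.mp (by omega)
      have hUmem : U ∈ X.powerset.filter (fun D => D.Nonempty ∧ (NN D).card < m * D.card) :=
        Finset.mem_filter.mpr ⟨Finset.mem_powerset.mpr hU, hUne, hlt⟩
      have := hmax U hUmem
      omega
    · refine ⟨∅, Finset.empty_subset _, by simp [hNN_def], ?_⟩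
      intro U hU hcard
      by_contra hlt
      push_neg at hlt
      have hUne : U.Nonempty := Finset.card_pos.mp (by omega)
      exact hfam ⟨U, Finset.mem_filter.mpr ⟨Finset.mem_powerset.mpr hU, hUne, hlt⟩⟩
  obtain ⟨DS, hDSX, hDSbound, hDSmax⟩ := hDS
  have hδx : DS.card ≤ X.card := Finset.card_le_card hDSX
  -- Hall condition
  have hHallCond : ∀ T ⊆ X \ DS, m * T.card ≤ ((NN T) \ NN DS).card := by
    intro T hT
    rcases T.eq_empty_or_nonempty with rfl | hTne
    · simp
    · have hdisjTD : Disjoint T DS := by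
        rw [Finset.disjoint_left]
        intro a ha had
        exact (Finset.mem_sdiff.mp (hT ha)).2 had
      have hU : DS ∪ T ⊆ X :=
        Finset.union_subset hDSX (fun a ha => (Finset.mem_sdiff.mp (hT ha)).1)
      have hcardU : (DS ∪ T).card = DS.card + T.card :=
        Finset.card_union_of_disjoint hdisjTD.symm
      have hgt : DS.card < (DS ∪ T).card := by
        have := Finset.card_pos.mpr hTne
        omega
      have hmain := hDSmax (DS ∪ T) hU hgt
      have hNNU : NN (DS ∪ T) = NN DS ∪ NN T := by
        ext p
        simp only [hNN_def, Finset.mem_biUnion, Finset.mem_union]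
        aesop
      have hcards : ((NN T) \ (NN DS)).card + (NN DS).card = (NN T ∪ NN DS).card :=
        Finset.card_sdiff_add_card _ _
      rw [hNNU, hcardU, Finset.union_comm (NN DS) (NN T)] at hmain
      rw [Nat.mul_add] at hmain
      omega
  -- Hall matching via padded bipartite graph
  set t : Fin n × Fin m → Finset (Fin d) := fun q =>
    if q.1 ∈ X \ DS then (L q.1) \ NN DS else Finset.univ with ht_def
  have hHall : ∀ A : Finset (Fin n × Fin m), A.card ≤ (A.biUnion t).card := by
    intro A
    by_cases hA : ∀ q ∈ A, q.1 ∈ X \ DS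
    · set T := A.image Prod.fst with hT
      have hTsub : T ⊆ X \ DS := by
        intro j hj
        rw [hT, Finset.mem_image] at hj
        obtain ⟨q, hq, rfl⟩ := hj
        exact hA q hq
      have hAsub : A ⊆ T ×ˢ (Finset.univ : Finset (Fin m)) := by
        intro q hq
        rw [Finset.mem_product]
        exact ⟨Finset.mem_image_of_mem _ hq, Finset.mem_univ _⟩
      have h1 : A.card ≤ T.card * m := by
        calc A.card ≤ (T ×ˢ (Finset.univ : Finset (Fin m))).card := Finset.card_le_card hAsub
          _ = T.card * m := by rw [Finset.card_product, Finset.card_univ, Fintype.card_fin]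
      have h2 : A.biUnion t = T.biUnion (fun j => (L j) \ NN DS) := by
        ext p
        simp only [Finset.mem_biUnion]
        constructor
        · rintro ⟨q, hq, hp⟩
          refine ⟨q.1, Finset.mem_image_of_mem _ hq, ?_⟩
          rw [ht_def] at hp
          dsimp only at hp
          rwa [if_pos (hA q hq)] at hp
        · rintro ⟨j, hj, hp⟩
          rw [hT, Finset.mem_image] at hj
          obtain ⟨q, hq, rfl⟩ := hj
          refine ⟨q, hq, ?_⟩
          rw [ht_def]
          dsimp only
          rwa [if_pos (hA q hq)]
      have h5 : (NN T) \ NN DS = T.biUnion (fun j => (L j) \ NN DS) := by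
        ext p
        simp only [hNN_def, Finset.mem_sdiff, Finset.mem_biUnion]
        tauto
      have h4 := hHallCond T hTsub
      have h6 : T.card * m = m * T.card := Nat.mul_comm _ _
      rw [h2, ← h5]
      omega
    · push_neg at hA
      obtain ⟨q0, hq0A, hq0⟩ := hA
      have huniv : (Finset.univ : Finset (Fin d)) ⊆ A.biUnion t := by
        intro p _
        rw [Finset.mem_biUnion]
        refine ⟨q0, hq0A, ?_⟩
        rw [ht_def]
        dsimp only
        rw [if_neg hq0]
        exact Finset.mem_univ _
      have h1 : d ≤ (A.biUnion t).card := by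
        calc d = (Finset.univ : Finset (Fin d)).card := by
              rw [Finset.card_univ, Fintype.card_fin]
          _ ≤ _ := Finset.card_le_card huniv
      have h2 : A.card ≤ n * m := by
        calc A.card ≤ (Finset.univ : Finset (Fin n × Fin m)).card :=
              Finset.card_le_card (Finset.subset_univ _)
          _ = n * m := by simp [Finset.card_univ]
      have h3 : n * m = m * n := Nat.mul_comm n m
      omega
  obtain ⟨f, hfinj, hft⟩ := (Finset.all_card_le_biUnion_card_iff_exists_injective t).mp hHall
  set MP : Finset (Fin d) := (((X \ DS) ×ˢ (Finset.univ : Finset (Fin m))).image f) with hMP_def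
  have hMPcard : MP.card = (X.card - DS.card) * m := by
    rw [hMP_def, Finset.card_image_of_injective _ hfinj, Finset.card_product,
      Finset.card_sdiff_of_subset hDSX, Finset.card_univ, Fintype.card_fin]
  have hMP_ND : Disjoint MP (NN DS) := by
    rw [Finset.disjoint_left]
    rintro p hp hpND
    rw [hMP_def, Finset.mem_image] at hp
    obtain ⟨q, hq, rfl⟩ := hp
    rw [Finset.mem_product] at hq
    have := hft q
    rw [ht_def] at this
    simp only [hq.1, if_pos] at this
    exact (Finset.mem_sdiff.mp this).2 hpND
  -- reserve R for the divider
  have hfree : m ≤ (Finset.univ \ (NN DS ∪ MP)).card := by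
    have hsum : (NN DS ∪ MP).card ≤ m * DS.card + (X.card - DS.card) * m := by
      calc (NN DS ∪ MP).card ≤ (NN DS).card + MP.card := Finset.card_union_le _ _
        _ ≤ m * DS.card + (X.card - DS.card) * m := by rw [hMPcard]; omega
    have h1 : m * DS.card + (X.card - DS.card) * m = m * X.card := by
      obtain ⟨k, hk⟩ := Nat.le.dest hδx
      rw [← hk]
      have : DS.card + k - DS.card = k := by omega
      rw [this]
      ring
    have h2 : m * X.card ≤ m * (n - 1) := Nat.mul_le_mul_left m hXcard
    have h3 : m + m * (n - 1) ≤ d := by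
      obtain ⟨k, hk⟩ : ∃ k, n = k + 1 := ⟨n - 1, by omega⟩
      subst hk
      have h4 : m * (k + 1 - 1) = m * k := by norm_num
      have h5 : m * (k + 1) = m * k + m := by ring
      omega
    have hcard : (Finset.univ \ (NN DS ∪ MP)).card = d - (NN DS ∪ MP).card := by
      rw [Finset.card_sdiff_of_subset (Finset.subset_univ _), Finset.card_univ, Fintype.card_fin]
    omega
  obtain ⟨R, hRsub, hRcard⟩ := Finset.exists_subset_card_eq hfree
  set FR : Finset (Fin d) := Finset.univ \ (NN DS ∪ MP ∪ R) with hFR_def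
  set itemsND : Finset α := (NN DS).biUnion P with hitems_def
  set gs : List (Finset α) :=
    (FR.toList.map P) ++ (itemsND.toList.map (fun a => ({a} : Finset α))) with hgs_def
  have hm0 : (0:ℝ) < (m:ℝ) := by exact_mod_cast (by omega : 0 < m)
  have hMP_FR : Disjoint MP FR := by
    rw [Finset.disjoint_right]
    intro p hp
    rw [hFR_def, Finset.mem_sdiff] at hp
    exact fun h => hp.2 (Finset.mem_union_left _ (Finset.mem_union_right _ h))
  have hR_FR : Disjoint R FR := by
    rw [Finset.disjoint_right]
    intro p hp
    rw [hFR_def, Finset.mem_sdiff] at hp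
    exact fun h => hp.2 (Finset.mem_union_right _ h)
  have hR_ND : Disjoint R (NN DS) := by
    rw [Finset.disjoint_left]
    intro p hp
    have h1 := hRsub hp
    rw [Finset.mem_sdiff] at h1
    exact fun h => h1.2 (Finset.mem_union_left _ h)
  have hMP_R : Disjoint MP R := by
    rw [Finset.disjoint_right]
    intro p hp
    have h1 := hRsub hp
    rw [Finset.mem_sdiff] at h1
    exact fun h => h1.2 (Finset.mem_union_right _ h)
  have hgs_disj : List.Pairwise Disjoint gs := by
    rw [hgs_def, List.pairwise_append]
    refine ⟨?_, ?_, ?_⟩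
    · exact pairwise_disjoint_toList_map FR P (fun a _ b _ hab => hQ1 D0 a b hab)
    · apply pairwise_disjoint_toList_map
      intro a _ b _ hab
      simpa [Finset.disjoint_singleton_left] using hab
    · intro g hg g' hg'
      rw [List.mem_map] at hg hg'
      obtain ⟨p, hp, rfl⟩ := hg
      obtain ⟨a, ha, rfl⟩ := hg'
      rw [Finset.mem_toList] at hp ha
      rw [Finset.disjoint_singleton_right]
      intro hap
      rw [hitems_def, Finset.mem_biUnion] at ha
      obtain ⟨p', hp', hap'⟩ := ha
      rw [hFR_def, Finset.mem_sdiff] at hp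
      have hpne : p ≠ p' := by
        rintro rfl
        exact hp.2 (Finset.mem_union_left _ (Finset.mem_union_left _ hp'))
      exact (Finset.disjoint_left.mp (hQ1 D0 p p' hpne) hap) hap'
  have hgs_union : lUnion gs = (FR ∪ NN DS).biUnion P := by
    rw [hgs_def, lUnion_append, lUnion_toList_map, lUnion_toList_map]
    have h1 : itemsND.biUnion (fun a => ({a} : Finset α)) = itemsND := by
      ext x
      simp
    rw [h1, hitems_def]
    ext x
    constructor
    · intro hx
      rcases Finset.mem_union.mp hx with h | h
      · obtain ⟨p, hp, hxp⟩ := Finset.mem_biUnion.mp h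
        exact Finset.mem_biUnion.mpr ⟨p, Finset.mem_union_left _ hp, hxp⟩
      · obtain ⟨p, hp, hxp⟩ := Finset.mem_biUnion.mp h
        exact Finset.mem_biUnion.mpr ⟨p, Finset.mem_union_right _ hp, hxp⟩
    · intro hx
      obtain ⟨p, hp, hxp⟩ := Finset.mem_biUnion.mp hx
      rcases Finset.mem_union.mp hp with h | h
      · exact Finset.mem_union_left _ (Finset.mem_biUnion.mpr ⟨p, h, hxp⟩)
      · exact Finset.mem_union_right _ (Finset.mem_biUnion.mpr ⟨p, h, hxp⟩)
  -- the ledger hypothesis for the bag lemma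
  have hBAGHYP : ∀ j ∈ DS, ∀ ms : List (Finset α), ms.Sublist gs →
      (∀ g ∈ ms, τ j ≤ (m : ℝ) * Val j g) → ms.length + 1 ≤ DS.card →
      (DS.card : ℝ) * τ j + ((DS.card : ℝ) - 1) * (τ j / m) +
        (((ms.map (Val j)).sum) - (ms.length : ℝ) * (τ j / m)) < (gs.map (Val j)).sum := by
    intro j hjDS ms hms hmed hlen
    have hjX : j ∈ X := hDSX hjDS
    have hjpos : 0 < τ j := (Finset.mem_filter.mp hjX).2
    have hm0 : (0:ℝ) < (m:ℝ) := by exact_mod_cast (by omega : 0 < m)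
    have hc : 0 < τ j / (m:ℝ) := by positivity
    have hLj_ND : L j ⊆ NN DS := fun p hp => Finset.mem_biUnion.mpr ⟨j, hjDS, hp⟩
    have hnotL : ∀ p : Fin d, p ∉ L j → Val j (P p) < τ j / m := by
      intro p hp
      rw [hL_def, Finset.mem_filter] at hp
      push_neg at hp
      have h1 := hp (Finset.mem_univ p)
      rw [lt_div_iff₀ hm0]
      nlinarith
    -- all granules of ms are singletons
    have hsing : ∀ g ∈ ms, ∃ a, g = {a} := by
      intro g hg
      have hggs : g ∈ gs := hms.subset hg
      rw [hgs_def, List.mem_append] at hggs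
      rcases hggs with hgl | hgr
      · exfalso
        rw [List.mem_map] at hgl
        obtain ⟨p, hp, rfl⟩ := hgl
        rw [Finset.mem_toList, hFR_def, Finset.mem_sdiff] at hp
        have hpND : p ∉ NN DS := fun h =>
          hp.2 (Finset.mem_union_left _ (Finset.mem_union_left _ h))
        have hpLj : p ∉ L j := fun h => hpND (hLj_ND h)
        exact absurd (hmed _ hg) (not_le.mpr (by
          have := hnotL p hpLj
          rw [lt_div_iff₀ hm0] at this
          nlinarith))
      · rw [List.mem_map] at hgr
        obtain ⟨a, _, rfl⟩ := hgr
        exact ⟨a, rfl⟩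
    have hms_disj : List.Pairwise Disjoint ms := hgs_disj.sublist hms
    have hValF : Val j (lUnion ms) = (ms.map (Val j)).sum := val_lUnion (Val j) (hadd j) hms_disj
    have hFcard : (lUnion ms).card ≤ ms.length := by
      have h1 : ms.map Finset.card = ms.map (fun _ => 1) :=
        List.map_congr_left (fun g hg => by obtain ⟨a, rfl⟩ := hsing g hg; simp)
      have h2 : ((ms.map (fun _ => 1)).sum) = ms.length := by
        simp [List.map_const']
      calc (lUnion ms).card ≤ (ms.map Finset.card).sum := card_lUnion_le ms
        _ = ms.length := by rw [h1, h2]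
    -- ROOT lemma
    have hδn : DS.card ≤ n - 1 := le_trans hδx hXcard
    have hFd : (lUnion ms).card + m ≤ d := by
      have h2 : m ≤ m * n := Nat.le_mul_of_pos_right m (by omega)
      omega
    have hroot := root_lemma (Val j) (hadd j) (hnonneg j) (by omega : 0 < m) (τ j) hjpos.le
      (Q j) (hQ1 j) (hQ2 j) (fun S hS => by rw [hτ_def]; exact hQ3 j S hS) (lUnion ms) hFd
    -- decomposition of the total value along the divider's partition
    have hVuniv : Val j Finset.univ = ∑ p ∈ (Finset.univ : Finset (Fin d)), Val j (P p) := by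
      conv_lhs => rw [← hQ2 D0]
      exact val_biUnion (Val j) (hadd j) _ P (fun a _ b _ hab => hQ1 D0 a b hab)
    have hUsplit : (Finset.univ : Finset (Fin d)) = (MP ∪ R) ∪ (FR ∪ NN DS) := by
      ext p
      simp only [Finset.mem_univ, true_iff, Finset.mem_union, hFR_def, Finset.mem_sdiff,
        Finset.mem_univ, true_and]
      tauto
    have hMP_FR : Disjoint MP FR := by
      rw [Finset.disjoint_right]
      intro p hp
      rw [hFR_def, Finset.mem_sdiff] at hp
      exact fun h => hp.2 (Finset.mem_union_left _ (Finset.mem_union_right _ h))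
    have hR_FR : Disjoint R FR := by
      rw [Finset.disjoint_right]
      intro p hp
      rw [hFR_def, Finset.mem_sdiff] at hp
      exact fun h => hp.2 (Finset.mem_union_right _ h)
    have hR_ND : Disjoint R (NN DS) := by
      rw [Finset.disjoint_left]
      intro p hp
      have h1 := hRsub hp
      rw [Finset.mem_sdiff] at h1
      exact fun h => h1.2 (Finset.mem_union_left _ h)
    have hMP_R : Disjoint MP R := by
      rw [Finset.disjoint_right]
      intro p hp
      have h1 := hRsub hp
      rw [Finset.mem_sdiff] at h1
      exact fun h => h1.2 (Finset.mem_union_right _ h)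
    have hd_MR_pool : Disjoint (MP ∪ R) (FR ∪ NN DS) := by
      rw [Finset.disjoint_union_left]
      constructor
      · rw [Finset.disjoint_union_right]
        exact ⟨hMP_FR, hMP_ND⟩
      · rw [Finset.disjoint_union_right]
        exact ⟨hR_FR, hR_ND⟩
    have hsum1 : ∑ p ∈ (Finset.univ : Finset (Fin d)), Val j (P p) =
        (∑ p ∈ MP, Val j (P p) + ∑ p ∈ R, Val j (P p)) + ∑ p ∈ FR ∪ NN DS, Val j (P p) := by
      conv_lhs => rw [hUsplit]
      rw [Finset.sum_union hd_MR_pool, Finset.sum_union hMP_R]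
    have hpool : (gs.map (Val j)).sum = ∑ p ∈ FR ∪ NN DS, Val j (P p) := by
      rw [← val_lUnion (Val j) (hadd j) hgs_disj, hgs_union]
      exact val_biUnion (Val j) (hadd j) _ P (fun a _ b _ hab => hQ1 D0 a b hab)
    -- bounds for the matched and reserved parts
    have hMPsum : ∑ p ∈ MP, Val j (P p) ≤ ((X.card : ℝ) - DS.card) * τ j := by
      have h1 : ∀ p ∈ MP, Val j (P p) ≤ τ j / m := by
        intro p hp
        refine le_of_lt (hnotL p (fun hpL => ?_))
        exact (Finset.disjoint_left.mp hMP_ND hp) (hLj_ND hpL)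
      calc ∑ p ∈ MP, Val j (P p) ≤ MP.card • (τ j / m) := Finset.sum_le_card_nsmul _ _ _ h1
        _ = ((X.card : ℝ) - DS.card) * τ j := by
            rw [hMPcard, nsmul_eq_mul, Nat.cast_mul, Nat.cast_sub hδx]
            field_simp
    have hRlt : ∑ p ∈ R, Val j (P p) < τ j := by
      have hRne : R.Nonempty := by
        rw [← Finset.card_pos, hRcard]
        omega
      have h1 : ∀ p ∈ R, Val j (P p) < τ j / m := by
        intro p hp
        refine hnotL p (fun hpL => ?_)
        have h2 := hRsub hp
        rw [Finset.mem_sdiff] at h2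
        exact h2.2 (Finset.mem_union_left _ (hLj_ND hpL))
      calc ∑ p ∈ R, Val j (P p) < ∑ _p ∈ R, (τ j / m) := Finset.sum_lt_sum_of_nonempty hRne h1
        _ = τ j := by
            rw [Finset.sum_const, hRcard, nsmul_eq_mul]
            field_simp
    -- arithmetic
    have harith : (m:ℝ) * ((X.card:ℝ) + 1) + (DS.card : ℝ) - 1 ≤ (d:ℝ) := by
      have h1 : m * (X.card + 1) + DS.card ≤ d + 1 := by
        have h2 : X.card + 1 ≤ n := by omega
        have h3 : m * (X.card + 1) ≤ m * n := Nat.mul_le_mul_left m h2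
        omega
      have h4 := (Nat.cast_le (α := ℝ)).mpr h1
      push_cast at h4
      linarith
    have hE1 : ((m:ℝ) * ((X.card:ℝ)+1) + (DS.card:ℝ) - 1) * (τ j / m)
        = ((X.card:ℝ)+1) * τ j + ((DS.card:ℝ) - 1) * (τ j / m) := by
      field_simp
      ring
    have hA : ((m:ℝ)*((X.card:ℝ)+1) + (DS.card:ℝ) - 1) * (τ j/m) ≤ (d:ℝ) * (τ j/m) :=
      mul_le_mul_of_nonneg_right harith hc.le
    have hB : (((lUnion ms).card : ℝ)) * (τ j/m) ≤ (ms.length : ℝ) * (τ j/m) :=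
      mul_le_mul_of_nonneg_right (by exact_mod_cast hFcard) hc.le
    have hE2 : ((X.card:ℝ) - DS.card) * τ j + (DS.card:ℝ)*τ j + τ j = ((X.card:ℝ)+1)*τ j := by
      ring
    have hE3 : ((d:ℝ) - ((lUnion ms).card:ℝ)) * (τ j/m)
        = (d:ℝ) * (τ j/m) - ((lUnion ms).card:ℝ) * (τ j/m) := by
      ring
    rw [hE3] at hroot
    linarith [hroot, hMPsum, hRlt, hA, hE1, hE2, hB, hsum1, hpool, hVuniv, hValF]
  obtain ⟨bag, hb1, hb2, hb3, hb4⟩ := bag_lemma Val hadd τ m (by omega) DS.card DS rfl gs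
    hgs_disj (fun j hj => (Finset.mem_filter.mp (hDSX hj)).2) hBAGHYP
  -- the allocation
  set Zpre : Fin n → Finset α := fun i =>
    if i ∈ X \ DS then ((Finset.univ : Finset (Fin m)).image (fun r => f (i, r))).biUnion P
    else if i ∈ DS then bag i else ∅ with hZpre_def
  set A : Finset α := (Finset.univ.erase D0).biUnion Zpre with hA_def
  set Z : Fin n → Finset α := fun i => if i = D0 then Finset.univ \ A else Zpre i with hZ_def
  -- basic structural facts
  have hZpreD0 : Zpre D0 = ∅ := by
    rw [hZpre_def]
    have h1 : D0 ∉ X \ DS := fun h => hD0X (Finset.mem_sdiff.mp h).1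
    have h2 : D0 ∉ DS := fun h => hD0X (hDSX h)
    simp [h1, h2]
  have hZpre_sub : ∀ i, i ≠ D0 → Zpre i ⊆ A := by
    intro i hi
    rw [hA_def]
    intro x hx
    rw [Finset.mem_biUnion]
    exact ⟨i, Finset.mem_erase.mpr ⟨hi, Finset.mem_univ _⟩, hx⟩
  have hMi_sub : ∀ i, i ∈ X \ DS →
      ((Finset.univ : Finset (Fin m)).image (fun r => f (i, r))) ⊆ MP := by
    intro i hi p hp
    rw [Finset.mem_image] at hp
    obtain ⟨r, _, rfl⟩ := hp
    rw [hMP_def]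
    exact Finset.mem_image_of_mem f (Finset.mem_product.mpr ⟨hi, Finset.mem_univ _⟩)
  have hbag_sub : ∀ i, bag i ⊆ (FR ∪ NN DS).biUnion P := fun i => by
    rw [← hgs_union]
    exact hb3 i
  have hmb : ∀ i' j', i' ∈ X \ DS →
      Disjoint ((((Finset.univ : Finset (Fin m)).image (fun r => f (i', r)))).biUnion P)
        (bag j') := by
    intro i' j' hi'
    refine Finset.disjoint_of_subset_right (hbag_sub j') ?_
    refine Finset.disjoint_of_subset_left
      (Finset.biUnion_subset_biUnion_of_subset_left P (hMi_sub i' hi')) ?_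
    apply biUnion_disjoint_of_disjoint P (hQ1 D0)
    rw [Finset.disjoint_union_right]
    exact ⟨hMP_FR, hMP_ND⟩
  have hZpre_disj : ∀ i j, i ≠ j → Disjoint (Zpre i) (Zpre j) := by
    intro i j hij
    rw [hZpre_def]
    dsimp only
    by_cases hi : i ∈ X \ DS <;> by_cases hj2 : j ∈ X \ DS
    · rw [if_pos hi, if_pos hj2]
      apply biUnion_disjoint_of_disjoint P (hQ1 D0)
      rw [Finset.disjoint_left]
      rintro p hp hp'
      rw [Finset.mem_image] at hp hp'
      obtain ⟨r, _, rfl⟩ := hp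
      obtain ⟨r', _, heq⟩ := hp'
      exact hij (congrArg Prod.fst (hfinj heq)).symm
    · rw [if_pos hi, if_neg hj2]
      by_cases hjD : j ∈ DS
      · rw [if_pos hjD]
        exact hmb i j hi
      · rw [if_neg hjD]
        exact Finset.disjoint_empty_right _
    · rw [if_neg hi, if_pos hj2]
      by_cases hiD : i ∈ DS
      · rw [if_pos hiD]
        exact (hmb j i hj2).symm
      · rw [if_neg hiD]
        exact Finset.disjoint_empty_left _
    · rw [if_neg hi, if_neg hj2]
      by_cases hiD : i ∈ DS <;> by_cases hjD : j ∈ DS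
      · rw [if_pos hiD, if_pos hjD]
        exact hb4 i j hij
      · rw [if_pos hiD, if_neg hjD]
        exact Finset.disjoint_empty_right _
      · rw [if_neg hiD, if_pos hjD]
        exact Finset.disjoint_empty_left _
      · rw [if_neg hiD, if_neg hjD]
        simp
  refine ⟨Z, ?_, ?_, ?_⟩
  · -- pairwise disjoint
    intro i j hij
    rw [hZ_def]
    dsimp only
    by_cases hi : i = D0 <;> by_cases hj : j = D0
    · exact absurd (hi.trans hj.symm) hij
    · rw [if_pos hi, if_neg hj]
      exact Finset.disjoint_of_subset_right (hZpre_sub j hj) Finset.sdiff_disjoint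
    · rw [if_neg hi, if_pos hj]
      exact Finset.disjoint_of_subset_left (hZpre_sub i hi) Finset.sdiff_disjoint.symm
    · rw [if_neg hi, if_neg hj]
      exact hZpre_disj i j hij
  · -- coverage
    apply Finset.Subset.antisymm
    · intro x _; exact Finset.mem_univ x
    · intro x _
      rw [Finset.mem_biUnion]
      by_cases hx : x ∈ A
      · rw [hA_def, Finset.mem_biUnion] at hx
        obtain ⟨i, hi, hxi⟩ := hx
        refine ⟨i, Finset.mem_univ _, ?_⟩
        rw [hZ_def]
        dsimp only
        rw [if_neg (Finset.mem_erase.mp hi).1]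
        exact hxi
      · refine ⟨D0, Finset.mem_univ _, ?_⟩
        rw [hZ_def]
        dsimp only
        rw [if_pos rfl]
        exact Finset.mem_sdiff.mpr ⟨Finset.mem_univ _, hx⟩
  · -- values
    intro i
    have hZpre_parts : ∀ i', Zpre i' ⊆ (MP ∪ (FR ∪ NN DS)).biUnion P := by
      intro i'
      rw [hZpre_def]
      dsimp only
      by_cases h1 : i' ∈ X \ DS
      · rw [if_pos h1]
        intro x hx
        rw [Finset.mem_biUnion] at hx ⊢
        obtain ⟨p, hp, hxp⟩ := hx
        exact ⟨p, Finset.mem_union_left _ (hMi_sub i' h1 hp), hxp⟩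
      · rw [if_neg h1]
        by_cases h2 : i' ∈ DS
        · rw [if_pos h2]
          intro x hx
          have h3 := hbag_sub i' hx
          rw [Finset.mem_biUnion] at h3 ⊢
          obtain ⟨p, hp, hxp⟩ := h3
          exact ⟨p, Finset.mem_union_right _ hp, hxp⟩
        · rw [if_neg h2]
          simp
    rw [hZ_def]
    dsimp only
    by_cases hi : i = D0
    · rw [if_pos hi]
      subst hi
      have hRA : Disjoint (R.biUnion P) A := by
        rw [hA_def, Finset.disjoint_biUnion_right]
        intro i' _
        refine Finset.disjoint_of_subset_right (hZpre_parts i') ?_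
        apply biUnion_disjoint_of_disjoint P (hQ1 D0)
        rw [Finset.disjoint_union_right]
        refine ⟨hMP_R.symm, ?_⟩
        rw [Finset.disjoint_union_right]
        exact ⟨hR_FR, hR_ND⟩
      have hsub : R.biUnion P ⊆ Finset.univ \ A := by
        intro x hx
        rw [Finset.mem_sdiff]
        exact ⟨Finset.mem_univ _, fun hxA => Finset.disjoint_left.mp hRA hx hxA⟩
      calc MMS (Val D0) m d ≤ Val D0 (R.biUnion P) := hQ3 D0 R hRcard
        _ ≤ Val D0 (Finset.univ \ A) := val_mono (Val D0) (hadd D0) (hnonneg D0) hsub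
    · rw [if_neg hi, hZpre_def]
      dsimp only
      by_cases hiX : i ∈ X \ DS
      · rw [if_pos hiX]
        set Mi := (Finset.univ : Finset (Fin m)).image (fun r => f (i, r)) with hMi
        have hinjr : Function.Injective (fun r => f (i, r)) := by
          intro r r' h
          have h2 := hfinj h
          exact (Prod.ext_iff.mp h2).2
        have hMicard : Mi.card = m := by
          rw [hMi, Finset.card_image_of_injective _ hinjr, Finset.card_univ, Fintype.card_fin]
        have hval : Val i (Mi.biUnion P) = ∑ p ∈ Mi, Val i (P p) :=
          val_biUnion (Val i) (hadd i) Mi P (fun a _ b _ hab => hQ1 D0 a b hab)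
        have hbound : ∀ p ∈ Mi, τ i / m ≤ Val i (P p) := by
          intro p hp
          rw [hMi, Finset.mem_image] at hp
          obtain ⟨r, _, rfl⟩ := hp
          have h1 := hft (i, r)
          rw [ht_def] at h1
          dsimp only at h1
          rw [if_pos hiX] at h1
          rw [Finset.mem_sdiff] at h1
          have h2 := h1.1
          rw [hL_def, Finset.mem_filter] at h2
          have h3 := h2.2
          rw [div_le_iff₀ hm0]
          nlinarith
        have h4 := Finset.card_nsmul_le_sum Mi (fun p => Val i (P p)) (τ i / m) hbound
        rw [hMicard] at h4
        have hsmul : (m:ℕ) • (τ i / (m:ℝ)) = τ i := by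
          rw [nsmul_eq_mul]
          field_simp
        rw [hsmul] at h4
        show τ i ≤ _
        rw [hval]
        exact h4
      · rw [if_neg hiX]
        by_cases hiDS : i ∈ DS
        · rw [if_pos hiDS]
          exact hb2 i hiDS
        · rw [if_neg hiDS]
          have hτneg : ¬ 0 < τ i := by
            intro hpos
            apply hiX
            rw [Finset.mem_sdiff]
            refine ⟨?_, hiDS⟩
            rw [hX_def, Finset.mem_filter]
            exact ⟨Finset.mem_erase.mpr ⟨hi, Finset.mem_univ _⟩, hpos⟩
          have h0 : Val i ∅ = 0 := val_empty (Val i) (hadd i)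
          show τ i ≤ Val i ∅
          rw [h0]
          exact not_lt.mp hτneg
end
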